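/- Let s be a real number with 0 ≤ s < 1, and let (k_n) be a sequence of natural numbers with n ≤ 2·k_n and k_n ≤ n for all n. Then the probability that the random 1-CARD-XOR formula ψ(n, k_n, ⌈s·n⌉) is satisfiable tends to 1 as n → ∞. -/

import Mathlib

open Finset Filter
open scoped Classical

/-- Probability of event `P` over a uniformly random pair `(A, b)` with `A` an
`m × n` matrix over `ZMod 2` and `b : Fin m → ZMod 2`. -/
noncomputable def xorProb (n m : ℕ)
    (P : Matrix (Fin m) (Fin n) (ZMod 2) × (Fin m → ZMod 2) → Prop) : ℝ :=
  (Finset.univ.filter P).card /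
    Fintype.card (Matrix (Fin m) (Fin n) (ZMod 2) × (Fin m → ZMod 2))

/-- The random 1-CARD-XOR formula `ψ(n,k,m)` is satisfied by the pair `(A, b)`:
there is an assignment of Hamming weight at most `k` solving `A ⬝ x = b`. -/
def cardXorSat (n k m : ℕ)
    (ab : Matrix (Fin m) (Fin n) (ZMod 2) × (Fin m → ZMod 2)) : Prop :=
  ∃ x : Fin n → ZMod 2, hammingNorm x ≤ k ∧ ab.1.mulVec x = ab.2

/-- Probability that `ψ(n,k,m)` is satisfiable. -/
noncomputable def satProb (n k m : ℕ) : ℝ := xorProb n m (cardXorSat n k m)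

/-- Probability that `ψ(n,k,m)` is unsatisfiable. -/
noncomputable def unsatProb (n k m : ℕ) : ℝ := xorProb n m fun ab => ¬ cardXorSat n k m ab

/-- `#F(n,k) = ∑_{w=0}^{k} C(n,w)`, the number of solutions of the at-most-`k`
cardinality constraint on `n` variables. -/
def cardSum (n k : ℕ) : ℕ := ∑ w ∈ Finset.range (k + 1), n.choose w

/-- The binary entropy function (with `H 0 = H 1 = 0` by `logb` junk values). -/
noncomputable def binEnt (μ : ℝ) : ℝ :=
  -μ * Real.logb 2 μ - (1 - μ) * Real.logb 2 (1 - μ)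

set_option maxHeartbeats 1000000

lemma rowCountAux {n : ℕ} (z : Fin n → ZMod 2) (hz : z ≠ 0) :
    2 * (univ.filter fun v : Fin n → ZMod 2 => dotProduct v z = 0).card = 2 ^ n := by
  obtain ⟨j, hj⟩ : ∃ j, z j ≠ 0 := by
    by_contra h; push_neg at h; exact hz (funext h)
  have hj1 : z j = 1 := by
    revert hj; generalize z j = a; revert a; decide
  set u : Fin n → ZMod 2 := Pi.single j 1 with hu
  have huz : dotProduct u z = 1 := by
    rw [hu, single_dotProduct, one_mul, hj1]
  have hcard : ((univ.filter fun v : Fin n → ZMod 2 => dotProduct v z = 0).card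
      = (univ.filter fun v : Fin n → ZMod 2 => ¬ dotProduct v z = 0).card) := by
    apply Finset.card_bij (fun v _ => v + u)
    · intro v hv
      simp only [mem_filter, mem_univ, true_and] at hv ⊢
      rw [add_dotProduct, hv, huz]; decide
    · intro v hv w hw h
      simpa using congrArg (fun t => t - u) h
    · intro w hw
      have huu : u + u = 0 := by
        funext i; exact CharTwo.add_self_eq_zero (u i)
      refine ⟨w + u, ?_, by rw [add_assoc, huu, add_zero]⟩
      simp only [mem_filter, mem_univ, true_and] at hw ⊢
      rw [add_dotProduct, huz]
      revert hw; generalize dotProduct w z = a; revert a; decide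
  have htot := Finset.card_filter_add_card_filter_not
    (s := (univ : Finset (Fin n → ZMod 2)))
    (p := fun v => dotProduct v z = 0)
  have hft : (univ : Finset (Fin n → ZMod 2)).card = 2 ^ n := by
    simp [Finset.card_univ]
  omega

lemma matCountAux {m n : ℕ} (z : Fin n → ZMod 2) (hz : z ≠ 0) :
    2 ^ m * (univ.filter fun A : Matrix (Fin m) (Fin n) (ZMod 2) => A.mulVec z = 0).card
      = 2 ^ (n * m) := by
  classical
  have e : {A : Matrix (Fin m) (Fin n) (ZMod 2) // A.mulVec z = 0}
      ≃ (Fin m → {v : Fin n → ZMod 2 // dotProduct v z = 0}) :=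
    (Equiv.subtypeEquiv (Matrix.of (m := Fin m) (n := Fin n) (α := ZMod 2)).symm
      (by intro A; simp only [Matrix.mulVec, funext_iff, Matrix.of, Pi.zero_apply]; exact Iff.rfl)).trans
      (Equiv.subtypePiEquivPi)
  have hc := Fintype.card_congr e
  rw [Fintype.card_subtype, Fintype.card_fun, Fintype.card_subtype, Fintype.card_fin] at hc
  rw [hc, ← mul_pow, rowCountAux z hz, ← pow_mul]

lemma hnFlip {n : ℕ} (x : Fin n → ZMod 2) :
    hammingNorm (x + 1) = n - hammingNorm x := by
  classical
  have hpred : ∀ i : Fin n, ((x + 1) i ≠ 0) = ¬ (x i ≠ 0) := by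
    intro i
    simp only [Pi.add_apply, Pi.one_apply]
    apply propext
    generalize x i = a; revert a; decide
  have h1 : hammingNorm (x + 1) = (univ.filter fun i : Fin n => ¬ x i ≠ 0).card := by
    unfold hammingNorm
    congr 1
    apply Finset.filter_congr
    intro i _
    rw [hpred i]
  have h2 := Finset.card_filter_add_card_filter_not
    (s := (univ : Finset (Fin n))) (p := fun i => x i ≠ 0)
  have h3 : (univ : Finset (Fin n)).card = n := by simp
  have h4 : hammingNorm x = (univ.filter fun i : Fin n => x i ≠ 0).card := rfl
  omega

lemma ballCardAux {n k : ℕ} (hk : n ≤ 2 * k) :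
    2 ^ n ≤ 2 * (univ.filter fun x : Fin n → ZMod 2 => hammingNorm x ≤ k).card := by
  classical
  have hle : (univ.filter fun x : Fin n → ZMod 2 => ¬ hammingNorm x ≤ k).card
      ≤ (univ.filter fun x : Fin n → ZMod 2 => hammingNorm x ≤ k).card := by
    apply Finset.card_le_card_of_injOn (fun x => x + 1)
    · intro x hx
      simp only [Finset.mem_coe, Finset.mem_filter, Finset.mem_univ, true_and] at hx ⊢
      have hb := hammingNorm_le_card_fintype (x := x)
      rw [hnFlip]
      simp only [Fintype.card_fin] at hb
      omega
    · intro x _ y _ h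
      have := congrArg (fun t => t - 1) h
      simpa [add_sub_cancel_right] using this
  have h2 := Finset.card_filter_add_card_filter_not
    (s := (univ : Finset (Fin n → ZMod 2))) (p := fun x => hammingNorm x ≤ k)
  have h3 : (univ : Finset (Fin n → ZMod 2)).card = 2 ^ n := by
    simp [Finset.card_univ]
  omega

lemma cardMatrixAux {m n : ℕ} :
    Fintype.card (Matrix (Fin m) (Fin n) (ZMod 2)) = 2 ^ (n * m) := by
  have : Fintype.card (Matrix (Fin m) (Fin n) (ZMod 2))
      = Fintype.card (Fin m → Fin n → ZMod 2) := rfl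
  rw [this]; simp [Fintype.card_fun, ← pow_mul, mul_comm]

lemma sumZAux {n m : ℕ} (S : Finset (Fin n → ZMod 2)) :
    ∑ ab : Matrix (Fin m) (Fin n) (ZMod 2) × (Fin m → ZMod 2),
      (S.filter fun x => ab.1.mulVec x = ab.2).card = S.card * 2 ^ (n * m) := by
  classical
  calc ∑ ab : Matrix (Fin m) (Fin n) (ZMod 2) × (Fin m → ZMod 2),
        (S.filter fun x => ab.1.mulVec x = ab.2).card
      = ∑ ab : Matrix (Fin m) (Fin n) (ZMod 2) × (Fin m → ZMod 2),
        ∑ x ∈ S, if ab.1.mulVec x = ab.2 then 1 else 0 := by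
        exact Finset.sum_congr rfl fun ab _ => Finset.card_filter _ _
    _ = ∑ x ∈ S, ∑ ab : Matrix (Fin m) (Fin n) (ZMod 2) × (Fin m → ZMod 2),
        if ab.1.mulVec x = ab.2 then 1 else 0 := Finset.sum_comm
    _ = ∑ x ∈ S, ∑ A : Matrix (Fin m) (Fin n) (ZMod 2), ∑ b : Fin m → ZMod 2,
        if A.mulVec x = b then 1 else 0 := by
        apply Finset.sum_congr rfl; intro x _
        rw [← Finset.univ_product_univ, Finset.sum_product]
    _ = ∑ x ∈ S, ∑ A : Matrix (Fin m) (Fin n) (ZMod 2), 1 := by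
        apply Finset.sum_congr rfl; intro x _
        apply Finset.sum_congr rfl; intro A _
        simp
    _ = S.card * 2 ^ (n * m) := by
        simp [Finset.card_univ, cardMatrixAux]

lemma sumZsqAux {n m : ℕ} (S : Finset (Fin n → ZMod 2)) :
    2 ^ m * ∑ ab : Matrix (Fin m) (Fin n) (ZMod 2) × (Fin m → ZMod 2),
      ((S.filter fun x => ab.1.mulVec x = ab.2).card) ^ 2
      ≤ S.card * (2 ^ m * 2 ^ (n * m) + S.card * 2 ^ (n * m)) := by
  classical
  set T : (Fin n → ZMod 2) → (Fin n → ZMod 2) → ℕ := fun x y =>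
    (univ.filter fun A : Matrix (Fin m) (Fin n) (ZMod 2) => A.mulVec x = A.mulVec y).card
    with hTdef
  have hswap : ∑ ab : Matrix (Fin m) (Fin n) (ZMod 2) × (Fin m → ZMod 2),
      ((S.filter fun x => ab.1.mulVec x = ab.2).card) ^ 2
      = ∑ x ∈ S, ∑ y ∈ S, T x y := by
    have step1 : ∀ ab : Matrix (Fin m) (Fin n) (ZMod 2) × (Fin m → ZMod 2),
        ((S.filter fun x => ab.1.mulVec x = ab.2).card) ^ 2
        = ∑ x ∈ S, ∑ y ∈ S, (if ab.1.mulVec x = ab.2 then 1 else 0)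
            * (if ab.1.mulVec y = ab.2 then 1 else 0) := by
      intro ab
      rw [Finset.card_filter, sq, Finset.sum_mul_sum]
    rw [Finset.sum_congr rfl fun ab _ => step1 ab]
    rw [Finset.sum_comm]
    apply Finset.sum_congr rfl; intro x _
    rw [Finset.sum_comm]
    apply Finset.sum_congr rfl; intro y _
    rw [← Finset.univ_product_univ, Finset.sum_product]
    have inner : ∀ A : Matrix (Fin m) (Fin n) (ZMod 2),
        (∑ b : Fin m → ZMod 2, (if A.mulVec x = b then 1 else 0)
          * (if A.mulVec y = b then 1 else 0))
        = if A.mulVec x = A.mulVec y then 1 else 0 := by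
      intro A
      rcases eq_or_ne (A.mulVec x) (A.mulVec y) with h | h
      · rw [if_pos h]
        have e : ∀ b : Fin m → ZMod 2, (if A.mulVec x = b then (1:ℕ) else 0)
            * (if A.mulVec y = b then 1 else 0) = if A.mulVec x = b then 1 else 0 := by
          intro b
          rcases eq_or_ne (A.mulVec x) b with hb | hb
          · rw [if_pos hb, if_pos (h.symm.trans hb), one_mul]
          · rw [if_neg hb, zero_mul]
        rw [Finset.sum_congr rfl fun b _ => e b]
        simp
      · rw [if_neg h]
        apply Finset.sum_eq_zero; intro b _
        rcases eq_or_ne (A.mulVec x) b with hb | hb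
        · have : ¬ A.mulVec y = b := fun hy => h (hb.trans hy.symm)
          simp [this]
        · simp [hb]
    rw [Finset.sum_congr rfl fun A _ => inner A, hTdef]
    exact (Finset.card_filter _ _).symm
  rw [hswap, Finset.mul_sum]
  have key : ∀ x ∈ S, 2 ^ m * ∑ y ∈ S, T x y
      ≤ 2 ^ m * 2 ^ (n * m) + S.card * 2 ^ (n * m) := by
    intro x hx
    rw [← Finset.add_sum_erase S (T x) hx, Nat.mul_add]
    have hdiag : T x x = 2 ^ (n * m) := by
      rw [hTdef]
      simp [Finset.filter_true_of_mem, Finset.card_univ, cardMatrixAux]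
    have hoff : ∀ y ∈ S.erase x, 2 ^ m * T x y ≤ 2 ^ (n * m) := by
      intro y hy
      have hxy : x - y ≠ 0 := sub_ne_zero.2 (Finset.ne_of_mem_erase hy).symm
      have : T x y = (univ.filter fun A : Matrix (Fin m) (Fin n) (ZMod 2) =>
          A.mulVec (x - y) = 0).card := by
        rw [hTdef]
        show (univ.filter fun A : Matrix (Fin m) (Fin n) (ZMod 2) =>
          A.mulVec x = A.mulVec y).card = _
        congr 1
        apply Finset.filter_congr
        intro A _
        rw [Matrix.mulVec_sub, sub_eq_zero]
      rw [this, matCountAux _ hxy]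
    calc 2 ^ m * T x x + 2 ^ m * ∑ y ∈ S.erase x, T x y
        = 2 ^ m * 2 ^ (n * m) + ∑ y ∈ S.erase x, 2 ^ m * T x y := by
          rw [hdiag, Finset.mul_sum]
      _ ≤ 2 ^ m * 2 ^ (n * m) + ∑ y ∈ S.erase x, 2 ^ (n * m) := by
          exact Nat.add_le_add_left (Finset.sum_le_sum hoff) _
      _ ≤ 2 ^ m * 2 ^ (n * m) + S.card * 2 ^ (n * m) := by
          rw [Finset.sum_const, smul_eq_mul]
          exact Nat.add_le_add_left
            (Nat.mul_le_mul_right _ (Finset.card_le_card (Finset.erase_subset _ _))) _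
  calc ∑ x ∈ S, 2 ^ m * ∑ y ∈ S, T x y
      ≤ ∑ _x ∈ S, (2 ^ m * 2 ^ (n * m) + S.card * 2 ^ (n * m)) := Finset.sum_le_sum key
    _ = S.card * (2 ^ m * 2 ^ (n * m) + S.card * 2 ^ (n * m)) := by
        rw [Finset.sum_const, smul_eq_mul]

lemma keyBound (n kk m : ℕ) (hk : n ≤ 2 * kk) :
    1 - (2:ℝ) ^ (m + 1) / 2 ^ n ≤ satProb n kk m := by
  classical
  set S : Finset (Fin n → ZMod 2) :=
    univ.filter fun x : Fin n → ZMod 2 => hammingNorm x ≤ kk with hSdef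
  set Z : Matrix (Fin m) (Fin n) (ZMod 2) × (Fin m → ZMod 2) → ℕ := fun ab =>
    (S.filter fun x => ab.1.mulVec x = ab.2).card with hZdef
  set F : Finset (Matrix (Fin m) (Fin n) (ZMod 2) × (Fin m → ZMod 2)) :=
    univ.filter (cardXorSat n kk m) with hFdef
  -- basic positivity facts
  have hc1 : 1 ≤ S.card := by
    refine Finset.card_pos.2 ⟨0, ?_⟩
    rw [hSdef, Finset.mem_filter]
    exact ⟨Finset.mem_univ _, by rw [hammingNorm_zero]; omega⟩
  set c : ℝ := (S.card : ℝ) with hcdef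
  set q : ℝ := (2:ℝ) ^ (n * m) with hqdef
  set t : ℝ := (2:ℝ) ^ m with htdef
  have hc : (0:ℝ) < c := by rw [hcdef]; exact_mod_cast hc1
  have hq : (0:ℝ) < q := by positivity
  have ht : (0:ℝ) < t := by positivity
  -- Z vanishes off F
  have hzero : ∀ ab : Matrix (Fin m) (Fin n) (ZMod 2) × (Fin m → ZMod 2),
      ab ∉ F → Z ab = 0 := by
    intro ab hab
    rw [hZdef]
    rw [Finset.card_eq_zero, Finset.eq_empty_iff_forall_notMem]
    intro x hx
    rw [hSdef] at hx
    simp only [Finset.mem_filter, Finset.mem_univ, true_and] at hx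
    exact hab (Finset.mem_filter.2 ⟨Finset.mem_univ _, ⟨x, hx.1, hx.2⟩⟩)
  -- Cauchy–Schwarz over F
  have hCS := sq_sum_le_card_mul_sum_sq (s := F) (f := fun ab => (Z ab : ℝ))
  have hsumF : ∑ ab ∈ F, (Z ab : ℝ) = ∑ ab : Matrix (Fin m) (Fin n) (ZMod 2) × (Fin m → ZMod 2), (Z ab : ℝ) :=
    Finset.sum_subset (Finset.subset_univ F) (fun ab _ hab => by rw [hzero ab hab]; norm_num)
  have hsqF : ∑ ab ∈ F, (Z ab : ℝ) ^ 2
      ≤ ∑ ab : Matrix (Fin m) (Fin n) (ZMod 2) × (Fin m → ZMod 2), (Z ab : ℝ) ^ 2 :=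
    Finset.sum_le_sum_of_subset_of_nonneg (Finset.subset_univ F)
      (fun ab _ _ => by positivity)
  set σ2 : ℝ := ∑ ab : Matrix (Fin m) (Fin n) (ZMod 2) × (Fin m → ZMod 2), (Z ab : ℝ) ^ 2
    with hσ2def
  have hσ2nonneg : 0 ≤ σ2 := by
    rw [hσ2def]; exact Finset.sum_nonneg fun ab _ => by positivity
  have hs1 : ∑ ab : Matrix (Fin m) (Fin n) (ZMod 2) × (Fin m → ZMod 2), (Z ab : ℝ) = c * q := by
    have := congrArg (fun N : ℕ => (N:ℝ)) (sumZAux (m := m) S)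
    push_cast at this
    rw [hcdef, hqdef]
    exact_mod_cast this
  have hs2 : t * σ2 ≤ c * (t * q + c * q) := by
    have := congrArg (fun N : ℕ => (N:ℝ))
      (rfl : (2 ^ m * ∑ ab : Matrix (Fin m) (Fin n) (ZMod 2) × (Fin m → ZMod 2), (Z ab) ^ 2) = _)
    have h := sumZsqAux (m := m) S
    have hcast : ((2 ^ m * ∑ ab : Matrix (Fin m) (Fin n) (ZMod 2) × (Fin m → ZMod 2), (Z ab) ^ 2 : ℕ) : ℝ)
        ≤ ((S.card * (2 ^ m * 2 ^ (n * m) + S.card * 2 ^ (n * m)) : ℕ) : ℝ) := by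
      exact_mod_cast h
    push_cast at hcast
    rw [htdef, hσ2def, hcdef, hqdef]
    push_cast
    convert hcast using 2 <;> ring
  have hCS' : (c * q) ^ 2 ≤ (F.card : ℝ) * σ2 := by
    rw [← hs1, ← hsumF]
    exact hCS.trans (mul_le_mul_of_nonneg_left hsqF (by positivity))
  -- combine
  have key2 : t * c * q ≤ (F.card : ℝ) * (t + c) := by
    have h1 : t * ((c * q) ^ 2) ≤ (F.card : ℝ) * (c * (t * q + c * q)) := by
      calc t * ((c * q) ^ 2) ≤ t * ((F.card : ℝ) * σ2) := by
            exact mul_le_mul_of_nonneg_left hCS' ht.le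
        _ = (F.card : ℝ) * (t * σ2) := by ring
        _ ≤ (F.card : ℝ) * (c * (t * q + c * q)) := by
            exact mul_le_mul_of_nonneg_left hs2 (by positivity)
    have hcq : (0:ℝ) < c * q := by positivity
    have h2 : (t * c * q) * (c * q) ≤ ((F.card : ℝ) * (t + c)) * (c * q) := by
      nlinarith [h1]
    exact le_of_mul_le_mul_right h2 hcq
  have hgoal : (1 - t / c) * (q * t) ≤ (F.card : ℝ) := by
    have htc : (0:ℝ) < t + c := by positivity
    have h3 : q * t * (c - t) * (t + c) ≤ (t * c * q) * c := by
      nlinarith [mul_nonneg (mul_nonneg hq.le ht.le) (sq_nonneg t)]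
    have h4 : q * t * (c - t) * (t + c) ≤ ((F.card : ℝ) * c) * (t + c) := by
      calc q * t * (c - t) * (t + c) ≤ (t * c * q) * c := h3
        _ ≤ ((F.card : ℝ) * (t + c)) * c := by
            exact mul_le_mul_of_nonneg_right key2 hc.le
        _ = ((F.card : ℝ) * c) * (t + c) := by ring
    have h5 : q * t * (c - t) ≤ (F.card : ℝ) * c := le_of_mul_le_mul_right h4 htc
    have heq : (1 - t / c) * (q * t) = (q * t * (c - t)) / c := by
      field_simp
    rw [heq, div_le_iff₀ hc]
    linarith
  -- conclude
  unfold satProb xorProb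
  have hNval : (Fintype.card (Matrix (Fin m) (Fin n) (ZMod 2) × (Fin m → ZMod 2)) : ℝ)
      = q * t := by
    rw [Fintype.card_prod, cardMatrixAux, Fintype.card_fun, Fintype.card_fin, ZMod.card,
      hqdef, htdef]
    push_cast
    ring
  rw [hNval, ← hFdef, le_div_iff₀ (by positivity : (0:ℝ) < q * t)]
  have hball : (2:ℝ) ^ n ≤ 2 * c := by
    have := ballCardAux hk
    rw [hcdef, hSdef]
    exact_mod_cast this
  have hmono : t / c ≤ (2:ℝ) ^ (m + 1) / 2 ^ n := by
    rw [div_le_div_iff₀ hc (by positivity)]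
    calc t * 2 ^ n ≤ t * (2 * c) := by nlinarith
      _ = 2 ^ (m + 1) * c := by rw [pow_succ, htdef]; ring
  calc (1 - (2:ℝ) ^ (m + 1) / 2 ^ n) * (q * t) ≤ (1 - t / c) * (q * t) := by
        apply mul_le_mul_of_nonneg_right _ (by positivity)
        linarith
    _ ≤ (F.card : ℝ) := hgoal

lemma satProb_le_one' (n kk m : ℕ) : satProb n kk m ≤ 1 := by
  unfold satProb xorProb
  rw [div_le_one (by exact_mod_cast Fintype.card_pos)]
  exact_mod_cast (Finset.card_le_univ _).trans_eq Finset.card_univ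

theorem stmt5 (s : ℝ) (hs0 : 0 ≤ s) (hs1 : s < 1) (k : ℕ → ℕ)
    (hk1 : ∀ n, n ≤ 2 * k n) (hk2 : ∀ n, k n ≤ n) :
    Tendsto (fun n : ℕ => satProb n (k n) ⌈s * n⌉₊) atTop (nhds 1) := by
  have hr0 : (0:ℝ) ≤ (2:ℝ) ^ (s - 1 : ℝ) := Real.rpow_nonneg (by norm_num) _
  have hr1 : (2:ℝ) ^ (s - 1 : ℝ) < 1 :=
    Real.rpow_lt_one_of_one_lt_of_neg (by norm_num) (by linarith)
  set r : ℝ := (2:ℝ) ^ (s - 1 : ℝ) with hrdef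
  have hlim0 : Tendsto (fun n : ℕ => r ^ n) atTop (nhds 0) :=
    tendsto_pow_atTop_nhds_zero_of_lt_one hr0 hr1
  have hlim : Tendsto (fun n : ℕ => 1 - 4 * r ^ n) atTop (nhds 1) := by
    have h : Tendsto (fun n : ℕ => 1 - 4 * r ^ n) atTop (nhds (1 - 4 * 0)) :=
      tendsto_const_nhds.sub (hlim0.const_mul 4)
    simpa using h
  apply tendsto_of_tendsto_of_tendsto_of_le_of_le' hlim tendsto_const_nhds
  · filter_upwards with n
    have hkey := keyBound n (k n) ⌈s * n⌉₊ (hk1 n)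
    refine le_trans ?_ hkey
    have hm : ((⌈s * n⌉₊ : ℝ) + 1) ≤ s * n + 2 := by
      have := Nat.ceil_lt_add_one (by positivity : (0:ℝ) ≤ s * n)
      linarith
    have hpow : (2:ℝ) ^ (⌈s * n⌉₊ + 1) ≤ (2:ℝ) ^ (s * n + 2 : ℝ) := by
      rw [← Real.rpow_natCast 2 (⌈s * n⌉₊ + 1)]
      apply Real.rpow_le_rpow_of_exponent_le (by norm_num)
      push_cast
      linarith
    have hrn : r ^ n = (2:ℝ) ^ ((s - 1) * n : ℝ) := by
      rw [hrdef, ← Real.rpow_natCast ((2:ℝ) ^ (s - 1 : ℝ)) n, ← Real.rpow_mul (by norm_num)]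
    have hsplit : (2:ℝ) ^ (s * n + 2 : ℝ) = (4 * r ^ n) * 2 ^ (n : ℕ) := by
      rw [hrn, show (s * n + 2 : ℝ) = ((s - 1) * n) + 2 + n by push_cast; ring,
        Real.rpow_add (by norm_num), Real.rpow_add (by norm_num),
        ← Real.rpow_natCast 2 n]
      norm_num
      ring
    have hdivle : (2:ℝ) ^ (⌈s * n⌉₊ + 1) / 2 ^ n ≤ 4 * r ^ n := by
      rw [div_le_iff₀ (by positivity)]
      calc (2:ℝ) ^ (⌈s * n⌉₊ + 1) ≤ 2 ^ (s * n + 2 : ℝ) := hpow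
        _ = (4 * r ^ n) * 2 ^ (n : ℕ) := hsplit
    linarith
  · filter_upwards with n using satProb_le_one' n (k n) ⌈s * n⌉₊
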